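/- A coarse structure E on a set X is induced by an extended pseudo-metric (i.e. E = E_d for some d : X × X → [0,∞]) if and only if E is countably generated, if and only if E contains a countable cofinal family of entourages (cofinal with respect to inclusion). -/

import Mathlib

open scoped ENNReal

/-- Composition of relations: `S ∘ R = {(x,z) | ∃ y, (x,y) ∈ S ∧ (y,z) ∈ R}`. -/
def relComp {X : Type*} (S R : Set (X × X)) : Set (X × X) :=
  {p | ∃ y, (p.1, y) ∈ S ∧ (y, p.2) ∈ R}

/-- Transposition of a relation. -/
def relOp {X : Type*} (R : Set (X × X)) : Set (X × X) := {p | (p.2, p.1) ∈ R}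

/-- A coarse structure on a set `X`: a family of relations on `X` closed under subsets and
finite unions, containing the diagonal, and closed under transposition and composition. -/
structure CoarseStructure (X : Type*) where
  ents : Set (Set (X × X))
  mem_of_subset : ∀ {E F : Set (X × X)}, E ∈ ents → F ⊆ E → F ∈ ents
  union_mem : ∀ {E F : Set (X × X)}, E ∈ ents → F ∈ ents → E ∪ F ∈ ents
  diag_mem : {p : X × X | p.1 = p.2} ∈ ents
  op_mem : ∀ {E : Set (X × X)}, E ∈ ents → relOp E ∈ ents
  comp_mem : ∀ {E F : Set (X × X)}, E ∈ ents → F ∈ ents → relComp E F ∈ ents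

/-- An extended pseudo-metric on `X` (values in `[0,∞]`). -/
structure ExtPseudoMetric (X : Type*) where
  d : X → X → ℝ≥0∞
  refl : ∀ x, d x x = 0
  symm : ∀ x y, d x y = d y x
  triangle : ∀ x y z, d x z ≤ d x y + d y z

/-- The coarse structure induced by an extended pseudo-metric: the entourages are the
relations on which `d` is bounded by some finite `r`. -/
def inducedByMetric {X : Type*} (ρ : ExtPseudoMetric X) (𝓔 : CoarseStructure X) : Prop :=
  𝓔.ents = {E | ∃ r : ℝ≥0∞, r < ⊤ ∧ ∀ p ∈ E, ρ.d p.1 p.2 < r}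

/-- `𝓔` is countably generated: it is the smallest coarse structure containing a given
countable family of relations. -/
def CountablyGenerated {X : Type*} (𝓔 : CoarseStructure X) : Prop :=
  ∃ S : Set (Set (X × X)), S.Countable ∧ S ⊆ 𝓔.ents ∧
    ∀ 𝓕 : CoarseStructure X, S ⊆ 𝓕.ents → 𝓔.ents ⊆ 𝓕.ents

/-- `𝓔` contains a countable cofinal family of entourages (w.r.t. inclusion). -/
def HasCountableCofinal {X : Type*} (𝓔 : CoarseStructure X) : Prop :=
  ∃ f : ℕ → Set (X × X), (∀ n, f n ∈ 𝓔.ents) ∧ ∀ E ∈ 𝓔.ents, ∃ n, E ⊆ f n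

namespace Stmt7Aux

variable {X : Type*}

/-- Iterated "thickening" sequence built from a family `g` of relations. -/
def seqE (g : ℕ → Set (X × X)) : ℕ → Set (X × X)
  | 0 => {p | p.1 = p.2}
  | n+1 =>
      (seqE g n ∪ g n ∪ relComp (seqE g n) (relComp (seqE g n) (seqE g n))) ∪
      relOp (seqE g n ∪ g n ∪ relComp (seqE g n) (relComp (seqE g n) (seqE g n)))

lemma seqE_mem (𝓔 : CoarseStructure X) {g : ℕ → Set (X × X)} (hg : ∀ n, g n ∈ 𝓔.ents) :
    ∀ n, seqE g n ∈ 𝓔.ents := by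
  intro n
  induction n with
  | zero => exact 𝓔.diag_mem
  | succ n ih =>
      have h1 : seqE g n ∪ g n ∪ relComp (seqE g n) (relComp (seqE g n) (seqE g n)) ∈ 𝓔.ents :=
        𝓔.union_mem (𝓔.union_mem ih (hg n)) (𝓔.comp_mem ih (𝓔.comp_mem ih ih))
      exact 𝓔.union_mem h1 (𝓔.op_mem h1)

lemma seqE_subset_succ (g : ℕ → Set (X × X)) (n : ℕ) : seqE g n ⊆ seqE g (n+1) :=
  fun p hp => Or.inl (Or.inl (Or.inl hp))

lemma seqE_mono (g : ℕ → Set (X × X)) {m n : ℕ} (h : m ≤ n) : seqE g m ⊆ seqE g n := by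
  induction h with
  | refl => exact subset_rfl
  | step h ih => exact ih.trans (seqE_subset_succ g _)

lemma diag_subset_seqE (g : ℕ → Set (X × X)) (n : ℕ) :
    {p : X × X | p.1 = p.2} ⊆ seqE g n := seqE_mono g (Nat.zero_le n)

lemma g_subset_seqE (g : ℕ → Set (X × X)) (n : ℕ) : g n ⊆ seqE g (n+1) :=
  fun p hp => Or.inl (Or.inl (Or.inr hp))

lemma triple_subset_seqE (g : ℕ → Set (X × X)) (n : ℕ) :
    relComp (seqE g n) (relComp (seqE g n) (seqE g n)) ⊆ seqE g (n+1) :=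
  fun p hp => Or.inl (Or.inr hp)

lemma comp_subset_seqE (g : ℕ → Set (X × X)) (n : ℕ) :
    relComp (seqE g n) (seqE g n) ⊆ seqE g (n+1) := by
  rintro ⟨x, z⟩ ⟨y, hxy, hyz⟩
  exact triple_subset_seqE g n ⟨y, hxy, y, diag_subset_seqE g n rfl, hyz⟩

lemma seqE_symm (g : ℕ → Set (X × X)) (n : ℕ) {x y : X} :
    (x, y) ∈ seqE g n ↔ (y, x) ∈ seqE g n := by
  cases n with
  | zero => exact eq_comm
  | succ n =>
      show _ ∈ (_ ∪ relOp _) ↔ _ ∈ (_ ∪ relOp _)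
      constructor
      · rintro (h | h)
        · exact Or.inr h
        · exact Or.inl h
      · rintro (h | h)
        · exact Or.inr h
        · exact Or.inl h

/-- The coarse structure generated by the sequence `seqE g`. -/
def boundedCS (g : ℕ → Set (X × X)) : CoarseStructure X where
  ents := {E | ∃ n, E ⊆ seqE g n}
  mem_of_subset := by rintro E F ⟨n, hE⟩ hFE; exact ⟨n, hFE.trans hE⟩
  union_mem := by
    rintro E F ⟨n, hE⟩ ⟨m, hF⟩
    exact ⟨max n m, Set.union_subset (hE.trans (seqE_mono g (le_max_left n m)))
      (hF.trans (seqE_mono g (le_max_right n m)))⟩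
  diag_mem := ⟨0, subset_rfl⟩
  op_mem := by
    rintro E ⟨n, hE⟩
    refine ⟨n, ?_⟩
    rintro ⟨x, y⟩ h
    exact (seqE_symm g n).mp (hE h)
  comp_mem := by
    rintro E F ⟨n, hE⟩ ⟨m, hF⟩
    refine ⟨max n m + 1, ?_⟩
    rintro ⟨x, z⟩ ⟨y, hxy, hyz⟩
    exact comp_subset_seqE g (max n m)
      ⟨y, seqE_mono g (le_max_left n m) (hE hxy), seqE_mono g (le_max_right n m) (hF hyz)⟩

/-! ### The chain pseudo-metric -/

/-- Weight of a pair: `2^n` for the least `n` with the pair in `seqE g n`, else `⊤`. -/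
noncomputable def ell (g : ℕ → Set (X × X)) (x y : X) : ℝ≥0∞ :=
  ⨅ n : {n : ℕ // (x, y) ∈ seqE g n}, (2 : ℝ≥0∞) ^ (n : ℕ)

lemma ell_le (g : ℕ → Set (X × X)) {x y : X} {n : ℕ} (h : (x, y) ∈ seqE g n) :
    ell g x y ≤ 2 ^ n := iInf_le _ (⟨n, h⟩ : {m : ℕ // (x, y) ∈ seqE g m})

lemma one_le_ell (g : ℕ → Set (X × X)) (x y : X) : 1 ≤ ell g x y :=
  le_iInf fun n => one_le_pow_of_one_le' (one_le_two : (1:ℝ≥0∞) ≤ 2) _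

lemma mem_of_ell_lt (g : ℕ → Set (X × X)) {x y : X} {n : ℕ}
    (h : ell g x y < 2 ^ (n+1)) : (x, y) ∈ seqE g n := by
  rw [ell, iInf_lt_iff] at h
  obtain ⟨⟨m, hm⟩, hlt⟩ := h
  have : m < n + 1 := by
    by_contra hc
    exact absurd (pow_le_pow_right' (one_le_two : (1:ℝ≥0∞) ≤ 2) (not_lt.mp hc)) (not_le.mpr hlt)
  exact seqE_mono g (Nat.lt_succ_iff.mp this) hm

lemma ell_symm (g : ℕ → Set (X × X)) (x y : X) : ell g x y = ell g y x := by
  have : ∀ a b : X, ell g a b ≤ ell g b a := by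
    intro a b
    exact le_iInf fun ⟨n, hn⟩ => iInf_le _ (⟨n, (seqE_symm g n).mp hn⟩ : {m : ℕ // (a, b) ∈ seqE g m})
  exact le_antisymm (this x y) (this y x)

/-- Sum of weights along a chain. -/
noncomputable def csum (g : ℕ → Set (X × X)) (c : ℕ → X) (k : ℕ) : ℝ≥0∞ :=
  ∑ i ∈ Finset.range k, ell g (c i) (c (i+1))

/-- The chain pseudo-metric. -/
noncomputable def cdist (g : ℕ → Set (X × X)) (x y : X) : ℝ≥0∞ :=
  ⨅ (k : ℕ) (c : ℕ → X) (_ : c 0 = x) (_ : c k = y), csum g c k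

lemma cdist_le (g : ℕ → Set (X × X)) {x y : X} {k : ℕ} {c : ℕ → X}
    (h0 : c 0 = x) (hk : c k = y) : cdist g x y ≤ csum g c k := by
  refine le_trans ?_ (le_refl (csum g c k))
  exact iInf_le_of_le k (iInf_le_of_le c (iInf_le_of_le h0 (iInf_le _ hk)))

lemma exists_chain_of_lt (g : ℕ → Set (X × X)) {x y : X} {a : ℝ≥0∞}
    (h : cdist g x y < a) : ∃ k c, c 0 = x ∧ c k = y ∧ csum g c k < a := by
  rw [cdist, iInf_lt_iff] at h
  obtain ⟨k, h⟩ := h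
  rw [iInf_lt_iff] at h
  obtain ⟨c, h⟩ := h
  rw [iInf_lt_iff] at h
  obtain ⟨h0, h⟩ := h
  rw [iInf_lt_iff] at h
  obtain ⟨hk, h⟩ := h
  exact ⟨k, c, h0, hk, h⟩

lemma cdist_refl (g : ℕ → Set (X × X)) (x : X) : cdist g x x = 0 :=
  le_antisymm (by simpa [csum] using cdist_le g (c := fun _ => x) (k := 0) rfl rfl)
    (zero_le)

lemma cdist_le_ell (g : ℕ → Set (X × X)) (x y : X) : cdist g x y ≤ ell g x y := by
  have h0 : (fun i : ℕ => if i = 0 then x else y) 0 = x := rfl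
  have h1 : (fun i : ℕ => if i = 0 then x else y) 1 = y := rfl
  have := cdist_le g (c := fun i : ℕ => if i = 0 then x else y) (k := 1) h0 h1
  simpa [csum, Finset.sum_range_one] using this

lemma csum_reverse (g : ℕ → Set (X × X)) (c : ℕ → X) (k : ℕ) :
    csum g (fun i => c (k - i)) k = csum g c k := by
  unfold csum
  rw [← Finset.sum_range_reflect (fun i => ell g (c i) (c (i+1))) k]
  refine Finset.sum_congr rfl fun i hi => ?_
  rw [Finset.mem_range] at hi
  have h1 : k - (i+1) = k - 1 - i := by omega
  have h2 : k - 1 - i + 1 = k - i := by omega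
  show ell g (c (k - i)) (c (k - (i+1))) = ell g (c (k - 1 - i)) (c (k - 1 - i + 1))
  rw [h1, h2, ell_symm]

lemma cdist_symm (g : ℕ → Set (X × X)) (x y : X) : cdist g x y = cdist g y x := by
  have key : ∀ a b : X, cdist g a b ≤ cdist g b a := by
    intro a b
    refine le_iInf fun k => le_iInf fun c => le_iInf fun h0 => le_iInf fun hk => ?_
    calc cdist g a b ≤ csum g (fun i => c (k - i)) k :=
          cdist_le g (by simpa using hk) (by simpa using h0)
      _ = csum g c k := csum_reverse g c k
  exact le_antisymm (key x y) (key y x)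

lemma csum_concat (g : ℕ → Set (X × X)) (c1 c2 : ℕ → X) (k1 k2 : ℕ)
    (hjoin : c1 k1 = c2 0) :
    csum g (fun i => if i < k1 then c1 i else c2 (i - k1)) (k1 + k2) =
      csum g c1 k1 + csum g c2 k2 := by
  unfold csum
  rw [Finset.sum_range_add]
  congr 1
  · refine Finset.sum_congr rfl fun i hi => ?_
    rw [Finset.mem_range] at hi
    show ell g (if i < k1 then c1 i else c2 (i - k1))
        (if i + 1 < k1 then c1 (i+1) else c2 (i + 1 - k1)) = ell g (c1 i) (c1 (i+1))
    rw [if_pos hi]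
    by_cases h : i + 1 < k1
    · rw [if_pos h]
    · have he : i + 1 = k1 := by omega
      rw [if_neg h, he, Nat.sub_self, ← hjoin]
  · refine Finset.sum_congr rfl fun i hi => ?_
    have h1 : ¬ (k1 + i < k1) := by omega
    have h2 : ¬ (k1 + i + 1 < k1) := by omega
    show ell g (if k1 + i < k1 then c1 (k1+i) else c2 (k1 + i - k1))
        (if k1 + i + 1 < k1 then c1 (k1+i+1) else c2 (k1 + i + 1 - k1)) = ell g (c2 i) (c2 (i+1))
    rw [if_neg h1, if_neg h2]
    have e1 : k1 + i - k1 = i := by omega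
    have e2 : k1 + i + 1 - k1 = i + 1 := by omega
    rw [e1, e2]

lemma cdist_triangle (g : ℕ → Set (X × X)) (x y z : X) :
    cdist g x z ≤ cdist g x y + cdist g y z := by
  refine ENNReal.le_of_forall_pos_le_add fun ε hε hfin => ?_
  have hε0 : (ε : ℝ≥0∞) ≠ 0 := by exact_mod_cast hε.ne'
  have hhalf : (ε : ℝ≥0∞) / 2 ≠ 0 := (ENNReal.half_pos hε0).ne'
  have hxy : cdist g x y < cdist g x y + ε / 2 :=
    ENNReal.lt_add_right (ne_top_of_le_ne_top hfin.ne le_self_add) hhalf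
  have hyz : cdist g y z < cdist g y z + ε / 2 :=
    ENNReal.lt_add_right (ne_top_of_le_ne_top hfin.ne le_add_self) hhalf
  obtain ⟨k1, c1, h10, h1k, hs1⟩ := exists_chain_of_lt g hxy
  obtain ⟨k2, c2, h20, h2k, hs2⟩ := exists_chain_of_lt g hyz
  have hjoin : c1 k1 = c2 0 := by rw [h1k, h20]
  have hc0 : (fun i => if i < k1 then c1 i else c2 (i - k1)) 0 = x := by
    by_cases h : 0 < k1
    · simpa [if_pos h] using h10
    · have : k1 = 0 := by omega
      simp only [this]
      simp only [Nat.lt_irrefl, if_false, Nat.sub_zero] at *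
      rw [h20, ← h1k, this, h10]
  have hck : (fun i => if i < k1 then c1 i else c2 (i - k1)) (k1 + k2) = z := by
    have h : ¬ (k1 + k2 < k1) := by omega
    simp only [if_neg h, Nat.add_sub_cancel_left]
    exact h2k
  calc cdist g x z ≤ csum g (fun i => if i < k1 then c1 i else c2 (i - k1)) (k1 + k2) :=
        cdist_le g hc0 hck
    _ = csum g c1 k1 + csum g c2 k2 := csum_concat g c1 c2 k1 k2 hjoin
    _ ≤ (cdist g x y + ε / 2) + (cdist g y z + ε / 2) := add_le_add hs1.le hs2.le
    _ = cdist g x y + cdist g y z + ε := by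
        rw [add_add_add_comm, ENNReal.add_halves]

/-- Frink-type lemma: a chain of total weight `< 2^(n+1)` joins points in `seqE g (n+1)`. -/
lemma frink (g : ℕ → Set (X × X)) :
    ∀ n k (c : ℕ → X), csum g c k < 2 ^ (n+1) → (c 0, c k) ∈ seqE g (n+1) := by
  intro n
  induction n with
  | zero =>
      intro k c h
      have hk : (k : ℝ≥0∞) ≤ csum g c k := by
        calc (k : ℝ≥0∞) = ∑ _i ∈ Finset.range k, 1 := by simp
          _ ≤ csum g c k := Finset.sum_le_sum fun i _ => one_le_ell g _ _
      have hk2 : (k : ℝ≥0∞) < 2 := lt_of_le_of_lt hk (by simpa using h)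
      have hk1 : k ≤ 1 := by
        by_contra hc
        have : (2 : ℝ≥0∞) ≤ (k : ℝ≥0∞) := by exact_mod_cast (by omega : 2 ≤ k)
        exact absurd hk2 (not_lt.mpr this)
      interval_cases k
      · exact diag_subset_seqE g 1 rfl
      · have : ell g (c 0) (c 1) < 2 ^ 1 := by simpa [csum] using h
        exact seqE_subset_succ g 0 (mem_of_ell_lt g (by simpa using this))
  | succ n ih =>
      intro k c h
      classical
      set P : ℕ → Prop := fun j => csum g c j < 2 ^ (n+1) with hP
      have hP0 : P 0 := by simp [hP, csum, pos_iff_ne_zero]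
      set j := Nat.findGreatest P k with hj
      have hPj : P j := Nat.findGreatest_spec (Nat.zero_le k) hP0
      have hjk : j ≤ k := Nat.findGreatest_le k
      rcases eq_or_lt_of_le hjk with heq | hlt
      · -- whole chain already small
        have hPj' : csum g c j < 2 ^ (n+1) := hPj
        rw [heq] at hPj'
        exact seqE_subset_succ g (n+1) (ih k c hPj')
      · -- split the chain at j
        have hfront : (c 0, c j) ∈ seqE g (n+1) := ih j c hPj
        have hnot : ¬ P (j+1) :=
          Nat.findGreatest_is_greatest (Nat.lt_succ_self j) hlt
        have hge : (2:ℝ≥0∞) ^ (n+1) ≤ csum g c (j+1) := not_lt.mp hnot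
        -- the single step
        have hstep_le : ell g (c j) (c (j+1)) ≤ csum g c k := by
          have hjmem : j ∈ Finset.range k := Finset.mem_range.mpr hlt
          exact Finset.single_le_sum (f := fun i => ell g (c i) (c (i+1)))
            (fun i _ => zero_le) hjmem
        have hstep : (c j, c (j+1)) ∈ seqE g (n+1) :=
          mem_of_ell_lt g (lt_of_le_of_lt hstep_le h)
        -- the back chain
        have hsplit : csum g c (j+1) + csum g (fun i => c (j+1+i)) (k - (j+1)) = csum g c k := by
          have hkeq : k = (j+1) + (k - (j+1)) := by omega
          conv_rhs => rw [hkeq]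
          exact (Finset.sum_range_add (fun i => ell g (c i) (c (i+1))) (j+1) (k - (j+1))).symm
        have hback_lt : csum g (fun i => c (j+1+i)) (k - (j+1)) < 2 ^ (n+1) := by
          by_contra hc
          have h1 : (2:ℝ≥0∞)^(n+1) + 2^(n+1) ≤ csum g c k := by
            rw [← hsplit]
            exact add_le_add hge (not_lt.mp hc)
          have h2 : (2:ℝ≥0∞)^(n+1) + 2^(n+1) = 2^(n+2) := by ring
          rw [h2] at h1
          exact absurd h (not_lt.mpr h1)
        have hback : (c (j+1), c k) ∈ seqE g (n+1) := by
          have := ih (k - (j+1)) (fun i => c (j+1+i)) hback_lt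
          have harg : j + 1 + (k - (j+1)) = k := by omega
          simpa [harg] using this
        exact triple_subset_seqE g (n+1) ⟨c j, hfront, c (j+1), hstep, hback⟩



/-! ### the four implications -/

set_option maxHeartbeats 1000000 in
lemma metric_of_hcc (𝓔 : CoarseStructure X) (h : ∃ f : ℕ → Set (X × X),
    (∀ n, f n ∈ 𝓔.ents) ∧ ∀ E ∈ 𝓔.ents, ∃ n, E ⊆ f n) :
    ∃ ρ : ExtPseudoMetric X, inducedByMetric ρ 𝓔 := by
  obtain ⟨f, hf, hcof⟩ := h
  refine ⟨⟨cdist f, cdist_refl f, cdist_symm f, cdist_triangle f⟩, ?_⟩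
  unfold inducedByMetric
  ext E
  simp only [Set.mem_setOf_eq]
  constructor
  · intro hE
    obtain ⟨n, hEn⟩ := hcof E hE
    refine ⟨2 ^ (n+2), ENNReal.pow_lt_top ENNReal.ofNat_lt_top, fun p hp => ?_⟩
    have h1 : (p.1, p.2) ∈ seqE f (n+1) := by
      have : p ∈ seqE f (n+1) := g_subset_seqE f n (hEn hp)
      simpa using this
    calc cdist f p.1 p.2 ≤ ell f p.1 p.2 := cdist_le_ell f _ _
      _ ≤ 2 ^ (n+1) := ell_le f h1
      _ < 2 ^ (n+2) := by
          have hne : (2:ℝ≥0∞) ^ (n+1) ≠ ⊤ := (ENNReal.pow_lt_top ENNReal.ofNat_lt_top).ne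
          have h0 : (2:ℝ≥0∞) ^ (n+1) ≠ 0 := pow_ne_zero _ (by norm_num)
          calc (2:ℝ≥0∞) ^ (n+1) < 2 ^ (n+1) + 2 ^ (n+1) := ENNReal.lt_add_right hne h0
            _ = 2 ^ (n+2) := by ring
  · rintro ⟨r, hr, hd⟩
    obtain ⟨m, hm⟩ := ENNReal.exists_nat_gt hr.ne
    have hm2 : (m : ℝ≥0∞) ≤ 2 ^ (m+1) := by
      have hnat : m ≤ 2 ^ (m+1) :=
        (Nat.lt_two_pow_self (n := m)).le.trans (Nat.pow_le_pow_right (by norm_num) (Nat.le_succ m))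
      calc (m : ℝ≥0∞) ≤ ((2 ^ (m+1) : ℕ) : ℝ≥0∞) := Nat.cast_le.mpr hnat
        _ = 2 ^ (m+1) := by push_cast; ring
    have hsub : E ⊆ seqE f (m+1) := by
      rintro ⟨x, y⟩ hp
      have hd' : cdist f x y < 2 ^ (m+1) :=
        lt_of_lt_of_le (lt_trans (hd _ hp) hm) hm2
      obtain ⟨k, c, h0, hk, hs⟩ := exists_chain_of_lt f hd'
      have := frink f m k c hs
      rwa [h0, hk] at this
    exact 𝓔.mem_of_subset (seqE_mem 𝓔 hf (m+1)) hsub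

lemma hcc_of_cg (𝓔 : CoarseStructure X)
    (h : ∃ S : Set (Set (X × X)), S.Countable ∧ S ⊆ 𝓔.ents ∧
      ∀ 𝓕 : CoarseStructure X, S ⊆ 𝓕.ents → 𝓔.ents ⊆ 𝓕.ents) :
    ∃ f : ℕ → Set (X × X), (∀ n, f n ∈ 𝓔.ents) ∧ ∀ E ∈ 𝓔.ents, ∃ n, E ⊆ f n := by
  obtain ⟨S, hSc, hSe, hmin⟩ := h
  have hc : (insert {p : X × X | p.1 = p.2} S).Countable := hSc.insert _
  have hne : (insert {p : X × X | p.1 = p.2} S).Nonempty := ⟨_, Set.mem_insert _ _⟩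
  obtain ⟨g, hg⟩ := hc.exists_eq_range hne
  have hsub : insert {p : X × X | p.1 = p.2} S ⊆ 𝓔.ents :=
    Set.insert_subset_iff.mpr ⟨𝓔.diag_mem, hSe⟩
  have hgents : ∀ n, g n ∈ 𝓔.ents := fun n => hsub (hg ▸ Set.mem_range_self n)
  have hS𝓕 : S ⊆ (boundedCS g).ents := by
    intro s hs
    have hsr : s ∈ Set.range g := hg ▸ Set.mem_insert_of_mem _ hs
    obtain ⟨n, rfl⟩ := hsr
    exact ⟨n + 1, g_subset_seqE g n⟩
  have hmain := hmin (boundedCS g) hS𝓕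
  exact ⟨fun n => seqE g n, fun n => seqE_mem 𝓔 hgents n, fun E hE => hmain hE⟩

lemma cg_of_hcc (𝓔 : CoarseStructure X) (h : ∃ f : ℕ → Set (X × X),
    (∀ n, f n ∈ 𝓔.ents) ∧ ∀ E ∈ 𝓔.ents, ∃ n, E ⊆ f n) :
    ∃ S : Set (Set (X × X)), S.Countable ∧ S ⊆ 𝓔.ents ∧
      ∀ 𝓕 : CoarseStructure X, S ⊆ 𝓕.ents → 𝓔.ents ⊆ 𝓕.ents := by
  obtain ⟨f, hf, hcof⟩ := h
  refine ⟨Set.range f, Set.countable_range f, Set.range_subset_iff.mpr hf, ?_⟩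
  intro 𝓕 hsub E hE
  obtain ⟨n, hn⟩ := hcof E hE
  exact 𝓕.mem_of_subset (hsub (Set.mem_range_self n)) hn

lemma hcc_of_metric (𝓔 : CoarseStructure X) (ρ : ExtPseudoMetric X)
    (h : inducedByMetric ρ 𝓔) :
    ∃ f : ℕ → Set (X × X), (∀ n, f n ∈ 𝓔.ents) ∧ ∀ E ∈ 𝓔.ents, ∃ n, E ⊆ f n := by
  refine ⟨fun n => {p | ρ.d p.1 p.2 < n}, fun n => ?_, fun E hE => ?_⟩
  · rw [h]
    exact ⟨n, ENNReal.natCast_lt_top n, fun p hp => hp⟩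
  · rw [h] at hE
    obtain ⟨r, hr, hd⟩ := hE
    obtain ⟨n, hn⟩ := ENNReal.exists_nat_gt hr.ne
    exact ⟨n, fun p hp => lt_trans (hd p hp) hn⟩

end Stmt7Aux

/-- A coarse structure is induced by an extended pseudo-metric iff it is countably
generated, iff it contains a countable cofinal family of entourages. -/
theorem stmt7 {X : Type*} (𝓔 : CoarseStructure X) :
    ((∃ ρ : ExtPseudoMetric X, inducedByMetric ρ 𝓔) ↔ CountablyGenerated 𝓔) ∧
    (CountablyGenerated 𝓔 ↔ HasCountableCofinal 𝓔) := by
  have h1 : (∃ ρ : ExtPseudoMetric X, inducedByMetric ρ 𝓔) → HasCountableCofinal 𝓔 :=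
    fun ⟨ρ, hρ⟩ => Stmt7Aux.hcc_of_metric 𝓔 ρ hρ
  have h2 : HasCountableCofinal 𝓔 → ∃ ρ : ExtPseudoMetric X, inducedByMetric ρ 𝓔 :=
    fun h => Stmt7Aux.metric_of_hcc 𝓔 h
  have h3 : CountablyGenerated 𝓔 → HasCountableCofinal 𝓔 :=
    fun h => Stmt7Aux.hcc_of_cg 𝓔 h
  have h4 : HasCountableCofinal 𝓔 → CountablyGenerated 𝓔 :=
    fun h => Stmt7Aux.cg_of_hcc 𝓔 h
  exact ⟨⟨fun h => h4 (h1 h), fun h => h2 (h3 h)⟩, ⟨h3, h4⟩⟩
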